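/- For the simple symmetric random walk, k * P(S_1 > 0, ..., S_{k-1} > 0, S_k = j) = j * P(S_k = j) for all integers j > 0 and k >= 1 (Kemperman's formula via time reversal). -/

import Mathlib

open MeasureTheory ProbabilityTheory

namespace KempAux

open Finset

/-- Discrete intermediate value theorem for upward crossings. -/
lemma ivt (f : ℕ → ℤ) (hf : ∀ n, f (n+1) ≤ f n + 1) {a b : ℕ} (hab : a ≤ b)
    {v : ℤ} (ha : f a ≤ v) (hb : v ≤ f b) : ∃ s, a ≤ s ∧ s ≤ b ∧ f s = v := by
  set T : Finset ℕ := (Finset.Icc a b).filter (fun t => f t ≤ v) with hT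
  have haT : a ∈ T := by simp [hT, hab, ha]
  have hTne : T.Nonempty := ⟨a, haT⟩
  set s := T.max' hTne with hs
  have hsT : s ∈ T := T.max'_mem hTne
  have hsIcc : s ∈ Finset.Icc a b := (Finset.mem_filter.mp hsT).1
  have hsle : f s ≤ v := (Finset.mem_filter.mp hsT).2
  have has : a ≤ s := (Finset.mem_Icc.mp hsIcc).1
  have hsb : s ≤ b := (Finset.mem_Icc.mp hsIcc).2
  refine ⟨s, has, hsb, ?_⟩
  by_contra hne
  have hlt : f s < v := lt_of_le_of_ne hsle hne
  have hsb' : s < b := by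
    rcases lt_or_eq_of_le hsb with h | h
    · exact h
    · exact absurd (h ▸ hlt) (not_lt.mpr hb)
  have h1 : s + 1 ∈ T := by
    refine Finset.mem_filter.mpr ⟨Finset.mem_Icc.mpr ⟨le_trans has (Nat.le_succ s), hsb'⟩, ?_⟩
    calc f (s+1) ≤ f s + 1 := hf s
    _ ≤ v := by omega
  have := T.le_max' _ h1
  omega

section cycle

variable (w : ℕ → ℤ) (k : ℕ)

/-- Partial sums. -/
def Sw (n : ℕ) : ℤ := ∑ i ∈ Finset.range n, w i

lemma Sw_succ (n : ℕ) : Sw w (n+1) = Sw w n + w n := Finset.sum_range_succ _ _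

lemma Sw_zero : Sw w 0 = 0 := rfl

variable {w k}

lemma Sw_step (hw : ∀ i, w i = 1 ∨ w i = -1) (n : ℕ) : Sw w (n+1) ≤ Sw w n + 1 := by
  rw [Sw_succ]; rcases hw n with h | h <;> omega

lemma Sw_shift (r : ℕ) : ∀ t, Sw w (r + t) = Sw w r + ∑ i ∈ Finset.range t, w (r + i) := by
  intro t
  induction t with
  | zero => simp
  | succ t ih => rw [← Nat.add_assoc, Sw_succ, ih, Finset.sum_range_succ]; ring

lemma Sw_add_period (hper : ∀ i, w (i + k) = w i) (n : ℕ) :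
    Sw w (n + k) = Sw w n + Sw w k := by
  induction n with
  | zero => simp [Sw_zero]
  | succ n ih =>
      have : n + 1 + k = (n + k) + 1 := by omega
      rw [this, Sw_succ, ih, Sw_succ, hper]
      ring

lemma Sw_add_mul_period (hper : ∀ i, w (i + k) = w i) (t : ℕ) :
    ∀ q, Sw w (t + q * k) = Sw w t + q * Sw w k := by
  intro q
  induction q with
  | zero => simp
  | succ q ih =>
      have : t + (q + 1) * k = (t + q * k) + k := by ring
      rw [this, Sw_add_period hper, ih]
      push_cast
      ring

/-- Global lower bound: the minimum over one period bounds all partial sums. -/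
lemma Sw_ge_min (hper : ∀ i, w (i + k) = w i) (hk : 0 < k) (hJ : 0 < Sw w k)
    {m₀ : ℤ} (hm : ∀ t ∈ Finset.range k, m₀ ≤ Sw w t) (n : ℕ) : m₀ ≤ Sw w n := by
  have h1 : n = n % k + (n / k) * k := by
    rw [Nat.mod_add_div' n k]
  rw [h1, Sw_add_mul_period hper]
  have h2 : m₀ ≤ Sw w (n % k) := hm _ (Finset.mem_range.mpr (Nat.mod_lt _ hk))
  have h3 : (0:ℤ) ≤ (n / k : ℕ) * Sw w k := by positivity
  omega

variable (w k) in
/-- Starting indices of rotations whose partial sums stay above the start. -/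
noncomputable def goodSet : Finset ℕ :=
  @Finset.filter _ (fun r => ∀ t, 1 ≤ t → t ≤ k → Sw w r < Sw w (r+t))
    (Classical.decPred _) (Finset.range k)

lemma mem_goodSet {r : ℕ} :
    r ∈ goodSet w k ↔ r < k ∧ ∀ t, 1 ≤ t → t ≤ k → Sw w r < Sw w (r+t) := by
  rw [goodSet, @Finset.mem_filter _ _ (Classical.decPred _), Finset.mem_range]

/-- The cycle lemma: the number of rotations with all partial sums positive equals the total sum. -/
lemma cycle_count (hw : ∀ i, w i = 1 ∨ w i = -1) (hper : ∀ i, w (i + k) = w i)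
    (hk : 0 < k) (hJ : 0 < Sw w k) :
    (goodSet w k).card = (Sw w k).toNat := by
  set J := Sw w k with hJdef
  obtain ⟨t₀, ht₀mem, ht₀min⟩ := Finset.exists_min_image (Finset.range k) (Sw w)
    ⟨0, Finset.mem_range.mpr hk⟩
  set m₀ := Sw w t₀ with hm₀
  have ht₀k : t₀ < k := Finset.mem_range.mp ht₀mem
  have hmin : ∀ n, m₀ ≤ Sw w n := Sw_ge_min hper hk hJ (fun t ht => ht₀min t ht)
  have key : (goodSet w k).card = (Finset.Ico m₀ (m₀ + J)).card := by
    apply Finset.card_bij (fun r _ => Sw w r)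
    · -- maps into Ico
      intro r hr
      obtain ⟨hrk, hgood⟩ := mem_goodSet.mp hr
      refine Finset.mem_Ico.mpr ⟨hmin r, ?_⟩
      rcases le_or_gt t₀ r with h | h
      · have h1 : 1 ≤ t₀ + k - r := by omega
        have h2 : t₀ + k - r ≤ k := by omega
        have := hgood _ h1 h2
        have he : r + (t₀ + k - r) = t₀ + k := by omega
        rw [he, Sw_add_period hper] at this
        omega
      · -- impossible: minimizer after r would be below m₀
        have h1 : 1 ≤ t₀ - r := by omega
        have h2 : t₀ - r ≤ k := by omega
        have := hgood _ h1 h2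
        have he : r + (t₀ - r) = t₀ := by omega
        rw [he] at this
        have := hmin r
        omega
    · -- injective
      intro r hr r' hr' heq
      rw [mem_goodSet] at hr hr'
      by_contra hne
      rcases lt_or_gt_of_ne hne with h | h
      · have := hr.2 (r' - r) (by omega) (by omega)
        have he : r + (r' - r) = r' := by omega
        rw [he] at this; omega
      · have := hr'.2 (r - r') (by omega) (by omega)
        have he : r' + (r - r') = r := by omega
        rw [he] at this; omega
    · -- surjective
      intro v hv
      rw [Finset.mem_Ico] at hv
      -- find a visit to v below k
      obtain ⟨s, hs1, hs2, hs3⟩ := ivt (Sw w) (Sw_step hw) (Nat.le_add_right t₀ k)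
        (hv.1) (by rw [Sw_add_period hper]; omega)
      have hsk : s < k := by
        by_contra hge
        push_neg at hge
        have h1 : s - k + k = s := by omega
        have h2 : Sw w (s - k) = v - J := by
          have := Sw_add_period hper (w := w) (s - k)
          rw [h1] at this; omega
        have := hmin (s - k)
        omega
      set F : Finset ℕ := (Finset.range k).filter (fun t => Sw w t = v) with hF
      have hsF : s ∈ F := by simp [hF, hsk, hs3]
      have hFne : F.Nonempty := ⟨s, hsF⟩
      set r := F.max' hFne with hr
      have hrF : r ∈ F := F.max'_mem hFne
      have hrk : r < k := Finset.mem_range.mp (Finset.mem_filter.mp hrF).1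
      have hrv : Sw w r = v := (Finset.mem_filter.mp hrF).2
      refine ⟨r, mem_goodSet.mpr ⟨hrk, ?_⟩, hrv⟩
      intro t h1t htk
      by_contra hle
      push_neg at hle
      rw [hrv] at hle
      have hrkper : Sw w (r + k) = v + J := by
        rw [Sw_add_period hper]; omega
      obtain ⟨s', hs'1, hs'2, hs'3⟩ := ivt (Sw w) (Sw_step hw)
        (show r + t ≤ r + k by omega) hle (by omega)
      have hs'r : r < s' := by omega
      rcases lt_or_ge s' k with h | h
      · have : s' ∈ F := by simp [hF, h, hs'3]
        have := F.le_max' _ this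
        omega
      · have h1 : s' - k + k = s' := by omega
        have h2 : Sw w (s' - k) = v - J := by
          have := Sw_add_period hper (w := w) (s' - k)
          rw [h1] at this; omega
        have := hmin (s' - k)
        omega
  rw [key, Int.card_Ico]
  simp

end cycle

end KempAux

namespace KempAux2

open KempAux Finset

variable {k j : ℕ} [NeZero k]

/-- The ±1 step sequence of a Boolean word, extended `k`-periodically. -/
def wB (b : Fin k → Bool) : ℕ → ℤ :=
  fun i => if b ⟨i % k, Nat.mod_lt i (Nat.pos_of_ne_zero (NeZero.ne k))⟩ then 1 else -1

lemma wB_pm (b : Fin k → Bool) (i : ℕ) : wB b i = 1 ∨ wB b i = -1 := by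
  unfold wB; split <;> simp

lemma wB_per (b : Fin k → Bool) (i : ℕ) : wB b (i + k) = wB b i := by
  unfold wB
  have h : (⟨(i + k) % k, Nat.mod_lt (i + k) (Nat.pos_of_ne_zero (NeZero.ne k))⟩ : Fin k)
      = ⟨i % k, Nat.mod_lt i (Nat.pos_of_ne_zero (NeZero.ne k))⟩ := by
    apply Fin.ext
    simp [Nat.add_mod_right]
  rw [h]

/-- Rotation of a word. -/
def rot (r : Fin k) (b : Fin k → Bool) : Fin k → Bool := fun i => b (i + r)

lemma wB_rot (r : Fin k) (b : Fin k → Bool) (i : ℕ) :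
    wB (rot r b) i = wB b (i + (r : ℕ)) := by
  unfold wB rot
  have h : ((⟨i % k, Nat.mod_lt i (Nat.pos_of_ne_zero (NeZero.ne k))⟩ : Fin k) + r)
      = (⟨(i + (r:ℕ)) % k, Nat.mod_lt _ (Nat.pos_of_ne_zero (NeZero.ne k))⟩ : Fin k) := by
    apply Fin.ext
    rw [Fin.val_add]
    exact Nat.mod_add_mod i k r
  rw [h]

lemma rot_rot (r s : Fin k) (b : Fin k → Bool) : rot r (rot s b) = rot (s + r) b := by
  funext i
  show b (i + r + s) = b (i + (s + r))
  rw [add_assoc, add_comm r s]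

lemma rot_zero (b : Fin k → Bool) : rot 0 b = b := by
  funext i; show b (i + 0) = b i; rw [add_zero]

lemma Sw_wB_rot (r : Fin k) (b : Fin k → Bool) (t : ℕ) :
    Sw (wB (rot r b)) t = Sw (wB b) ((r : ℕ) + t) - Sw (wB b) (r : ℕ) := by
  rw [Sw_shift (w := wB b) (r : ℕ) t]
  have : Sw (wB (rot r b)) t = ∑ i ∈ Finset.range t, wB b ((r:ℕ) + i) := by
    unfold Sw
    refine Finset.sum_congr rfl fun i _ => ?_
    rw [wB_rot, add_comm]
  omega

lemma Sw_wB_rot_k (r : Fin k) (b : Fin k → Bool) :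
    Sw (wB (rot r b)) k = Sw (wB b) k := by
  rw [Sw_wB_rot, Sw_add_period (wB_per b)]
  ring

variable (k j) in
/-- Words with total sum `j`. -/
noncomputable def DSet : Finset (Fin k → Bool) :=
  @Finset.filter _ (fun b => Sw (wB b) k = (j : ℤ)) (Classical.decPred _) Finset.univ

variable (k j) in
/-- Words with all proper partial sums positive and total sum `j`. -/
noncomputable def CSet : Finset (Fin k → Bool) :=
  @Finset.filter _
    (fun b => (∀ t, 1 ≤ t → t < k → 0 < Sw (wB b) t) ∧ Sw (wB b) k = (j : ℤ))
    (Classical.decPred _) Finset.univ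

lemma mem_DSet {b : Fin k → Bool} : b ∈ DSet k j ↔ Sw (wB b) k = (j : ℤ) := by
  rw [DSet, @Finset.mem_filter _ _ (Classical.decPred _)]
  simp

lemma mem_CSet {b : Fin k → Bool} :
    b ∈ CSet k j ↔ (∀ t, 1 ≤ t → t < k → 0 < Sw (wB b) t) ∧ Sw (wB b) k = (j : ℤ) := by
  rw [CSet, @Finset.mem_filter _ _ (Classical.decPred _)]
  simp

/-- The key combinatorial identity, by double counting rotations. -/
theorem count_eq (hj : 0 < j) :
    k * (CSet k j).card = j * (DSet k j).card := by
  classical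
  have hk : 0 < k := Nat.pos_of_ne_zero (NeZero.ne k)
  have key : ∀ r : Fin k, ∀ b, b ∈ DSet k j → (rot r b ∈ DSet k j) := by
    intro r b hb
    rw [mem_DSet] at hb ⊢
    rw [Sw_wB_rot_k]; exact hb
  have hCD : CSet k j ⊆ DSet k j := by
    intro b hb; rw [mem_CSet] at hb; exact mem_DSet.mpr hb.2
  -- the double-counted quantity
  have count1 : ∀ r : Fin k,
      ((DSet k j).filter (fun b => rot r b ∈ CSet k j)).card = (CSet k j).card := by
    intro r
    apply Finset.card_bij (fun b _ => rot r b)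
    · intro b hb; exact (Finset.mem_filter.mp hb).2
    · intro b hb b' hb' heq
      have := congrArg (rot (-r)) heq
      rwa [rot_rot, rot_rot, add_neg_cancel, rot_zero, rot_zero] at this
    · intro c hc
      refine ⟨rot (-r) c, Finset.mem_filter.mpr ⟨key _ _ (hCD hc), ?_⟩, ?_⟩
      · rwa [rot_rot, neg_add_cancel, rot_zero]
      · rw [rot_rot, neg_add_cancel, rot_zero]
  have count2 : ∀ b, b ∈ DSet k j →
      (Finset.univ.filter (fun r : Fin k => rot r b ∈ CSet k j)).card = j := by
    intro b hb
    rw [mem_DSet] at hb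
    have hJ : 0 < Sw (wB b) k := by rw [hb]; exact_mod_cast hj
    have hcard : (Finset.univ.filter (fun r : Fin k => rot r b ∈ CSet k j)).card
        = (goodSet (wB b) k).card := by
      apply Finset.card_bij (fun (r : Fin k) _ => (r : ℕ))
      · intro r hr
        rw [Finset.mem_filter, mem_CSet] at hr
        rw [mem_goodSet]
        refine ⟨r.isLt, fun t h1 h2 => ?_⟩
        rcases eq_or_lt_of_le h2 with h | h
        · subst h
          rw [Sw_add_period (wB_per b), hb]
          have : (0:ℤ) < (j:ℤ) := by exact_mod_cast hj
          omega
        · have := hr.2.1 t h1 h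
          rw [Sw_wB_rot r b t] at this
          omega
      · intro r _ r' _ h; exact Fin.ext h
      · intro r' hr'
        rw [mem_goodSet] at hr'
        refine ⟨⟨r', hr'.1⟩, Finset.mem_filter.mpr ⟨Finset.mem_univ _, ?_⟩, rfl⟩
        rw [mem_CSet]
        constructor
        · intro t h1 h2
          rw [Sw_wB_rot]
          simp only [Fin.val_mk]
          have := hr'.2 t h1 (le_of_lt h2)
          omega
        · rw [Sw_wB_rot_k]; exact hb
    rw [hcard, cycle_count (wB_pm b) (wB_per b) hk hJ, hb]
    simp
  -- double counting
  have main : ∑ r : Fin k, ∑ b ∈ DSet k j, (if rot r b ∈ CSet k j then 1 else 0)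
      = ∑ b ∈ DSet k j, ∑ r : Fin k, (if rot r b ∈ CSet k j then 1 else 0) :=
    Finset.sum_comm
  have lhs : ∑ r : Fin k, ∑ b ∈ DSet k j, (if rot r b ∈ CSet k j then 1 else 0)
      = k * (CSet k j).card := by
    have : ∀ r : Fin k, ∑ b ∈ DSet k j, (if rot r b ∈ CSet k j then 1 else 0)
        = (CSet k j).card := by
      intro r
      rw [← count1 r, Finset.card_filter]
    have h2 : ∑ r : Fin k, ∑ b ∈ DSet k j, (if rot r b ∈ CSet k j then 1 else 0)
        = ∑ _r : Fin k, (CSet k j).card := Finset.sum_congr rfl (fun r _ => this r)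
    rw [h2, Finset.sum_const, Finset.card_univ, Fintype.card_fin, smul_eq_mul]
  have rhs : ∑ b ∈ DSet k j, ∑ r : Fin k, (if rot r b ∈ CSet k j then 1 else 0)
      = j * (DSet k j).card := by
    have : ∀ b ∈ DSet k j, ∑ r : Fin k, (if rot r b ∈ CSet k j then 1 else 0) = j := by
      intro b hb
      conv_rhs => rw [← count2 b hb]
      rw [Finset.card_filter]
    have h2 : ∑ b ∈ DSet k j, ∑ r : Fin k, (if rot r b ∈ CSet k j then 1 else 0)
        = ∑ _b ∈ DSet k j, j := by
      apply Finset.sum_congr rfl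
      intro x hx
      exact this x hx
    rw [h2, Finset.sum_const, smul_eq_mul, mul_comm]
  rw [← lhs, main, rhs]

end KempAux2

open MeasureTheory ProbabilityTheory KempAux KempAux2

/-- Kemperman's formula for the simple symmetric random walk:
`k · P(S_1 > 0, ..., S_{k-1} > 0, S_k = j) = j · P(S_k = j)` for integers `j > 0`, `k ≥ 1`. -/
theorem kemperman_formula
    {Ω : Type*} [MeasurableSpace Ω] (P : Measure Ω) [IsProbabilityMeasure P]
    (X : ℕ → Ω → ℝ)
    (hindep : iIndepFun X P)
    (hmeas : ∀ i, Measurable (X i))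
    (hdist : ∀ i, Measure.map (X i) P
      = (1 / 2 : ENNReal) • Measure.dirac (1 : ℝ)
          + (1 / 2 : ENNReal) • Measure.dirac (-1 : ℝ))
    (S : ℕ → Ω → ℝ) (hS : ∀ m ω, S m ω = ∑ i ∈ Finset.range m, X i ω)
    (k j : ℕ) (hk : 1 ≤ k) (hj : 0 < j) :
    (k : ENNReal) * P {ω | (∀ i, 1 ≤ i → i < k → 0 < S i ω) ∧ S k ω = (j : ℝ)}
      = (j : ENNReal) * P {ω | S k ω = (j : ℝ)} := by
  classical
  haveI : NeZero k := ⟨by omega⟩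
  set val : Bool → ℝ := fun x => if x then 1 else -1 with hval
  -- single-coordinate probabilities
  have hhalf : ∀ (i : ℕ) (x : Bool), P {ω | X i ω = val x} = 1/2 := by
    intro i x
    have h0 : {ω | X i ω = val x} = X i ⁻¹' {val x} := rfl
    rw [h0, ← Measure.map_apply (hmeas i) (measurableSet_singleton _), hdist i]
    have h1 : (1 : ℝ) ≠ -1 := by norm_num
    cases x <;>
      simp [Measure.add_apply, Measure.smul_apply, Measure.dirac_apply, Set.indicator_apply,
        hval, h1, h1.symm, smul_eq_mul]
  -- the bad null set
  set Bad : ℕ → Set Ω := fun i => X i ⁻¹' (({1, -1} : Set ℝ)ᶜ) with hBad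
  have hBadnull : ∀ i, P (Bad i) = 0 := by
    intro i
    have hm : MeasurableSet (({1, -1} : Set ℝ)ᶜ) :=
      (((measurableSet_singleton (-1:ℝ)).insert 1)).compl
    rw [hBad]
    rw [← Measure.map_apply (hmeas i) hm, hdist i]
    simp [Measure.add_apply, Measure.smul_apply, Measure.dirac_apply, Set.indicator_apply]
  set N : Set Ω := ⋃ i : Fin k, Bad (i : ℕ) with hN
  have hNnull : P N = 0 := measure_iUnion_null fun i => hBadnull i
  -- the atoms
  set A : (Fin k → Bool) → Set Ω := fun b => ⋂ i : Fin k, {ω | X (i : ℕ) ω = val (b i)}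
    with hA
  have hAmeas : ∀ b, MeasurableSet (A b) := by
    intro b
    exact MeasurableSet.iInter fun i => (hmeas i) (measurableSet_singleton _)
  have hAprob : ∀ b, P (A b) = (1/2 : ENNReal)^k := by
    intro b
    set sets : ℕ → Set ℝ := fun i =>
      if h : i < k then {val (b ⟨i, h⟩)} else Set.univ with hsets
    have hmeassets : ∀ i, i ∈ Finset.range k → MeasurableSet (sets i) := by
      intro i _
      rw [hsets]
      by_cases h : i < k
      · simp only [dif_pos h]; exact measurableSet_singleton _
      · simp only [dif_neg h]; exact MeasurableSet.univ
    have hprod := hindep.measure_inter_preimage_eq_mul (Finset.range k) hmeassets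
    have hset : (⋂ i ∈ Finset.range k, X i ⁻¹' sets i) = A b := by
      ext ω
      simp only [Set.mem_iInter, Finset.mem_range, hA, Set.mem_preimage, Set.mem_setOf_eq]
      constructor
      · intro h i
        have := h i.val i.isLt
        rw [hsets] at this
        simp only [i.isLt, dif_pos] at this
        simpa using this
      · intro h i hi
        rw [hsets]
        simp only [hi, dif_pos]
        have := h ⟨i, hi⟩
        simpa using this
    rw [hset] at hprod
    rw [hprod]
    have hfac : ∀ i ∈ Finset.range k, P (X i ⁻¹' sets i) = (1/2 : ENNReal) := by
      intro i hi
      rw [Finset.mem_range] at hi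
      rw [hsets]
      simp only [hi, dif_pos]
      exact hhalf i _
    rw [Finset.prod_congr rfl hfac, Finset.prod_const, Finset.card_range]
  -- disjointness of atoms
  have hdisj : ∀ (s : Finset (Fin k → Bool)), (↑s : Set (Fin k → Bool)).PairwiseDisjoint A := by
    intro s b _ b' _ hbb'
    rw [Function.onFun, Set.disjoint_left]
    intro ω hω hω'
    apply hbb'
    funext i
    have h1 : X (i:ℕ) ω = val (b i) := by
      have := Set.mem_iInter.mp hω i; simpa using this
    have h2 : X (i:ℕ) ω = val (b' i) := by
      have := Set.mem_iInter.mp hω' i; simpa using this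
    have : val (b i) = val (b' i) := h1 ▸ h2
    rw [hval] at this
    by_contra hne
    cases hb : b i <;> cases hb' : b' i <;> simp [hb, hb'] at this hne <;> norm_num at this
  -- bridge between atoms and combinatorial sums
  have bridge : ∀ (b : Fin k → Bool) (ω : Ω), ω ∈ A b → ∀ m, m ≤ k →
      S m ω = ((Sw (wB b) m : ℤ) : ℝ) := by
    intro b ω hω m hm
    rw [hS]
    have : ((Sw (wB b) m : ℤ) : ℝ) = ∑ i ∈ Finset.range m, ((wB b i : ℤ) : ℝ) := by
      rw [Sw]; push_cast; ring
    rw [this]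
    refine Finset.sum_congr rfl fun i hi => ?_
    rw [Finset.mem_range] at hi
    have hik : i < k := lt_of_lt_of_le hi hm
    have hXi : X i ω = val (b ⟨i, hik⟩) := by
      have := Set.mem_iInter.mp hω ⟨i, hik⟩; simpa using this
    rw [hXi]
    unfold wB
    have hmk : (⟨i % k, Nat.mod_lt i (Nat.pos_of_ne_zero (NeZero.ne k))⟩ : Fin k)
        = ⟨i, hik⟩ := by
      apply Fin.ext
      simp [Nat.mod_eq_of_lt hik]
    rw [hmk]
    cases b ⟨i, hik⟩ <;> simp [hval]
  -- atoms avoid the bad set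
  have hAN : ∀ b (ω : Ω), ω ∈ A b → ω ∉ N := by
    intro b ω hω hωN
    rw [hN] at hωN
    obtain ⟨i, hi⟩ := Set.mem_iUnion.mp hωN
    rw [hBad] at hi
    have hXi : X (i:ℕ) ω = val (b i) := by
      have := Set.mem_iInter.mp hω i; simpa using this
    apply hi
    rw [hXi, hval]
    cases b i <;> simp
  -- canonical atom of a non-bad point
  have hcover : ∀ ω : Ω, ω ∉ N → ∃ b, ω ∈ A b := by
    intro ω hω
    refine ⟨fun i => decide (X (i:ℕ) ω = 1), ?_⟩
    rw [hA]
    rw [Set.mem_iInter]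
    intro i
    have hi : X (i:ℕ) ω ∈ ({1, -1} : Set ℝ) := by
      by_contra h
      exact hω (Set.mem_iUnion.mpr ⟨i, h⟩)
    rcases hi with h | h
    · simp [Set.mem_setOf_eq, h, hval]
    · have h' : X (i:ℕ) ω = -1 := h
      have hne : ¬ (X (i:ℕ) ω = 1) := by rw [h']; norm_num
      simp only [Set.mem_setOf_eq, hval, hne, decide_eq_true_eq]
      rw [h']
      norm_num
  -- event-membership characterizations
  set E : Set Ω := {ω | (∀ i, 1 ≤ i → i < k → 0 < S i ω) ∧ S k ω = (j : ℝ)} with hE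
  set F : Set Ω := {ω | S k ω = (j : ℝ)} with hF
  have evE : ∀ b (ω : Ω), ω ∈ A b → (ω ∈ E ↔ b ∈ CSet k j) := by
    intro b ω hω
    rw [hE, Set.mem_setOf_eq, mem_CSet]
    constructor
    · rintro ⟨h1, h2⟩
      constructor
      · intro t ht1 ht2
        have := h1 t ht1 ht2
        rw [bridge b ω hω t (le_of_lt ht2)] at this
        exact_mod_cast this
      · have := h2
        rw [bridge b ω hω k le_rfl] at this
        exact_mod_cast this
    · rintro ⟨h1, h2⟩
      constructor
      · intro t ht1 ht2
        rw [bridge b ω hω t (le_of_lt ht2)]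
        exact_mod_cast h1 t ht1 ht2
      · rw [bridge b ω hω k le_rfl]
        exact_mod_cast h2
  have evF : ∀ b (ω : Ω), ω ∈ A b → (ω ∈ F ↔ b ∈ DSet k j) := by
    intro b ω hω
    rw [hF, Set.mem_setOf_eq, mem_DSet]
    constructor
    · intro h2
      rw [bridge b ω hω k le_rfl] at h2
      exact_mod_cast h2
    · intro h2
      rw [bridge b ω hω k le_rfl]
      exact_mod_cast h2
  -- decomposition of events into atoms
  have hdecomp : ∀ (G : Set Ω) (T : Finset (Fin k → Bool)),
      (∀ b (ω : Ω), ω ∈ A b → (ω ∈ G ↔ b ∈ T)) →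
      P G = T.card * (1/2 : ENNReal)^k := by
    intro G T hGT
    have hsub : G ∩ Nᶜ = ⋃ b ∈ T, A b := by
      ext ω
      constructor
      · rintro ⟨hωG, hωN⟩
        obtain ⟨b, hb⟩ := hcover ω hωN
        exact Set.mem_biUnion ((hGT b ω hb).mp hωG) hb
      · intro hω
        obtain ⟨b, hbT, hb⟩ := Set.mem_iUnion₂.mp hω
        exact ⟨(hGT b ω hb).mpr hbT, hAN b ω hb⟩
    have h1 : P G = P (G ∩ Nᶜ) := by
      apply le_antisymm
      · calc P G ≤ P ((G ∩ Nᶜ) ∪ N) := by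
              apply measure_mono
              intro ω hω
              by_cases h : ω ∈ N
              · exact Or.inr h
              · exact Or.inl ⟨hω, h⟩
          _ ≤ P (G ∩ Nᶜ) + P N := measure_union_le _ _
          _ = P (G ∩ Nᶜ) := by rw [hNnull, add_zero]
      · exact measure_mono Set.inter_subset_left
    rw [h1, hsub, measure_biUnion_finset (hdisj T) (fun b _ => hAmeas b)]
    have : ∀ b ∈ T, P (A b) = (1/2 : ENNReal)^k := fun b _ => hAprob b
    rw [Finset.sum_congr rfl this, Finset.sum_const, nsmul_eq_mul]
  have hPE : P E = (CSet k j).card * (1/2 : ENNReal)^k := hdecomp E (CSet k j) evE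
  have hPF : P F = (DSet k j).card * (1/2 : ENNReal)^k := hdecomp F (DSet k j) evF
  rw [hPE, hPF, ← mul_assoc, ← mul_assoc]
  congr 1
  have := count_eq (k := k) hj
  calc (k : ENNReal) * (CSet k j).card = ((k * (CSet k j).card : ℕ) : ENNReal) := by push_cast; ring
    _ = ((j * (DSet k j).card : ℕ) : ENNReal) := by rw [this]
    _ = (j : ENNReal) * (DSet k j).card := by push_cast; ring
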